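/- Suppose H_k is prime and k ≡ 3 (mod 4). Then 5 is a quadratic non-residue modulo H_k. -/
import Mathlib

private instance fact5 : Fact (Nat.Prime 5) := ⟨by norm_num⟩

private lemma leg53 : legendreSym 5 3 = -1 := by decide

theorem five_qnr_H (k : ℕ) (hk : 0 < k) (h : k % 4 = 3)
    (hp : Nat.Prime (2 ^ (2 * k + 1) - 2 ^ (k + 1) + 1)) :
    ¬ IsSquare (5 : ZMod (2 ^ (2 * k + 1) - 2 ^ (k + 1) + 1)) := by
  set N := 2 ^ (2 * k + 1) - 2 ^ (k + 1) + 1 with hN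
  haveI : Fact (Nat.Prime N) := ⟨hp⟩
  haveI : Fact (Nat.Prime 5) := ⟨by norm_num⟩
  -- N is odd, hence ≠ 2
  have hle : 2 ^ (k + 1) ≤ 2 ^ (2 * k + 1) := Nat.pow_le_pow_right (by norm_num) (by omega)
  have h2a : 2 ∣ 2 ^ (2 * k + 1) := dvd_pow_self 2 (by omega)
  have h2b : 2 ∣ 2 ^ (k + 1) := dvd_pow_self 2 (by omega)
  have hN2 : N ≠ 2 := by omega
  -- N ≡ 3 mod 5
  obtain ⟨m, hm⟩ : ∃ m, k = 4 * m + 3 := ⟨k / 4, by omega⟩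
  have hmod : N % 5 = 3 := by
    have e1 : 2 ^ (2 * k + 1) = 16 ^ (2 * m + 1) * 8 := by
      subst hm
      rw [show 2 * (4 * m + 3) + 1 = 4 * (2 * m + 1) + 3 by ring, pow_add, pow_mul]
      norm_num
    have e2 : 2 ^ (k + 1) = 16 ^ (m + 1) := by
      subst hm
      rw [show 4 * m + 3 + 1 = 4 * (m + 1) by ring, pow_mul]
      norm_num
    have m1 : 16 ^ (2 * m + 1) % 5 = 1 := by
      have : (16:ℕ) ^ (2 * m + 1) % 5 = (16 % 5) ^ (2 * m + 1) % 5 := by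
        rw [Nat.pow_mod]
      simpa using this
    have m2 : 16 ^ (m + 1) % 5 = 1 := by
      have : (16:ℕ) ^ (m + 1) % 5 = (16 % 5) ^ (m + 1) % 5 := by rw [Nat.pow_mod]
      simpa using this
    have e1' : 2 ^ (2 * k + 1) % 5 = 3 := by
      rw [e1, Nat.mul_mod, m1]
    have e2' : 2 ^ (k + 1) % 5 = 1 := by rw [e2, m2]
    omega
  -- use quadratic reciprocity
  have h5 : ((5 : ℤ) : ZMod N) = (5 : ZMod N) := by push_cast; ring
  rw [← h5, ← legendreSym.eq_neg_one_iff N]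
  rw [show (5:ℤ) = ((5:ℕ):ℤ) by norm_cast,
    legendreSym.quadratic_reciprocity_one_mod_four (by norm_num) hN2]
  rw [legendreSym.mod 5 N]
  have h53 : ((N : ℤ) % ((5:ℕ):ℤ)) = 3 := by push_cast; omega
  rw [h53]
  exact leg53
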